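/- Let ψ : FreeGroup(ℕ) → G_BV be the homomorphism sending the free generator indexed by i to π_i, let P denote the subgroup of G_BV generated by {π_i : i ∈ ℕ}, and let φ : FreeGroup(ℕ) → Perm(ℕ) be the homomorphism sending the free generator indexed by i to the transposition swapping i and i+1. Then for every w ∈ FreeGroup(ℕ) and every m ∈ ℕ: (1) there exists w' ∈ P with ψ(w)·v_m = v_{φ(w)(m)}·w'; (2) there exists w'' ∈ P with v_m^{-1}·ψ(w) = w''·v_{φ(w)^{-1}(m)}^{-1}. Moreover, if w lies in the subgroup of FreeGroup(ℕ) generated by the free generators indexed by 0, 1, …, k, then w' and w'' above can be taken in the subgroup of G_BV generated by {π_0, π_1, …, π_{k+1}}, and φ(w)(m) = m for m > k+1 while φ(w)(m) ≤ k+1 for m ≤ k+1. -/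

import Mathlib

namespace BrinStmt6

/-- The free-group generators for the presentation of `G_BV`:
`Sum.inl n` is `v_n`, `Sum.inr (Sum.inl n)` is `π_n`, and
`Sum.inr (Sum.inr n)` is `π̄_n`. -/
def vF (n : ℕ) : FreeGroup (ℕ ⊕ ℕ ⊕ ℕ) := FreeGroup.of (Sum.inl n)
def piF (n : ℕ) : FreeGroup (ℕ ⊕ ℕ ⊕ ℕ) := FreeGroup.of (Sum.inr (Sum.inl n))
def opiF (n : ℕ) : FreeGroup (ℕ ⊕ ℕ ⊕ ℕ) := FreeGroup.of (Sum.inr (Sum.inr n))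

/-- The relators (R1)–(R10) of the presentation of the group `G_BV`. -/
def gbvRels : Set (FreeGroup (ℕ ⊕ ℕ ⊕ ℕ)) :=
  { r | (∃ m q : ℕ, m < q ∧ r = vF q * vF m * (vF m * vF (q+1))⁻¹) ∨
        (∃ m q : ℕ, m < q ∧ r = piF q * vF m * (vF m * piF (q+1))⁻¹) ∨
        (∃ (m : ℕ) (e : ℤ), (e = 1 ∨ e = -1) ∧
            r = (piF m) ^ e * vF m *
              (vF (m+1) * (piF m) ^ e * (piF (m+1)) ^ e)⁻¹) ∨
        (∃ m q : ℕ, q + 1 < m ∧ r = piF q * vF m * (vF m * piF q)⁻¹) ∨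
        (∃ m q : ℕ, m < q ∧ r = opiF q * vF m * (vF m * opiF (q+1))⁻¹) ∨
        (∃ (m : ℕ) (e : ℤ), (e = 1 ∨ e = -1) ∧
            r = (opiF m) ^ e * vF m * ((piF m) ^ e * (opiF (m+1)) ^ e)⁻¹) ∨
        (∃ m q : ℕ, (m + 2 ≤ q ∨ q + 2 ≤ m) ∧
            r = piF q * piF m * (piF m * piF q)⁻¹) ∨
        (∃ m : ℕ, r = piF m * piF (m+1) * piF m *
            (piF (m+1) * piF m * piF (m+1))⁻¹) ∨
        (∃ m q : ℕ, m + 2 ≤ q ∧ r = opiF q * piF m * (piF m * opiF q)⁻¹) ∨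
        (∃ m : ℕ, r = piF m * opiF (m+1) * piF m *
            (opiF (m+1) * piF m * opiF (m+1))⁻¹) }

/-- The group `G_BV`, presented by generators `v_n, π_n, π̄_n` and relations (R1)–(R10). -/
abbrev GBV := PresentedGroup gbvRels

/-- The generator `v_n` of `G_BV`. -/
def vG (n : ℕ) : GBV := PresentedGroup.of (Sum.inl n)
/-- The generator `π_n` of `G_BV`. -/
def piG (n : ℕ) : GBV := PresentedGroup.of (Sum.inr (Sum.inl n))
/-- The generator `π̄_n` of `G_BV`. -/
def opiG (n : ℕ) : GBV := PresentedGroup.of (Sum.inr (Sum.inr n))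

/-- The homomorphism `ψ : FreeGroup ℕ → G_BV` sending the `i`-th free generator to `π_i`. -/
def ψ : FreeGroup ℕ →* GBV := FreeGroup.lift piG

/-- The subgroup `P` of `G_BV` generated by `{π_i : i ∈ ℕ}`. -/
def P : Subgroup GBV := Subgroup.closure {x : GBV | ∃ i, x = piG i}

/-- The homomorphism `φ : FreeGroup ℕ → Perm ℕ` sending the `i`-th free generator
to the transposition `(i, i+1)`. -/
def φ : FreeGroup ℕ →* Equiv.Perm ℕ := FreeGroup.lift fun i => Equiv.swap i (i+1)

open Subgroup

private lemma relG {a b : FreeGroup (ℕ ⊕ ℕ ⊕ ℕ)} (h : a * b⁻¹ ∈ gbvRels) :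
    PresentedGroup.mk gbvRels a = PresentedGroup.mk gbvRels b := by
  have h1 : PresentedGroup.mk gbvRels (a * b⁻¹) = 1 :=
    (QuotientGroup.eq_one_iff _).2 (Subgroup.subset_normalClosure h)
  rw [map_mul, map_inv] at h1
  exact mul_inv_eq_one.mp h1

private lemma rel2 (m q : ℕ) (h : m < q) : piG q * vG m = vG m * piG (q + 1) := by
  have h1 := relG (a := piF q * vF m) (b := vF m * piF (q + 1))
    (Or.inr (Or.inl ⟨m, q, h, rfl⟩))
  simp only [map_mul] at h1
  exact h1

private lemma rel3 (m : ℕ) (e : ℤ) (he : e = 1 ∨ e = -1) :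
    (piG m) ^ e * vG m = vG (m + 1) * (piG m) ^ e * (piG (m + 1)) ^ e := by
  have h1 := relG (a := (piF m) ^ e * vF m)
    (b := vF (m + 1) * (piF m) ^ e * (piF (m + 1)) ^ e)
    (Or.inr (Or.inr (Or.inl ⟨m, e, he, rfl⟩)))
  simp only [map_mul, map_zpow] at h1
  exact h1

private lemma rel4 (m q : ℕ) (h : q + 1 < m) : piG q * vG m = vG m * piG q := by
  have h1 := relG (a := piF q * vF m) (b := vF m * piF q)
    (Or.inr (Or.inr (Or.inr (Or.inl ⟨m, q, h, rfl⟩))))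
  simp only [map_mul] at h1
  exact h1

/-- The key single-generator computation. -/
private lemma gen_v (i m : ℕ) {S : Subgroup GBV} (hS : ∀ j, j ≤ i + 1 → piG j ∈ S) :
    ∃ c ∈ S, piG i * vG m = vG (Equiv.swap i (i + 1) m) * c := by
  rcases lt_trichotomy m i with h | rfl | h
  · refine ⟨piG (i + 1), hS _ le_rfl, ?_⟩
    rw [Equiv.swap_apply_of_ne_of_ne (by omega) (by omega)]
    exact rel2 m i h
  · refine ⟨piG m * piG (m + 1), S.mul_mem (hS _ (by omega)) (hS _ le_rfl), ?_⟩
    rw [Equiv.swap_apply_left]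
    have h1 := rel3 m 1 (Or.inl rfl)
    simp only [zpow_one] at h1
    rw [h1]; group
  · rcases Nat.lt_or_ge (i + 1) m with h2 | h2
    · refine ⟨piG i, hS _ (by omega), ?_⟩
      rw [Equiv.swap_apply_of_ne_of_ne (by omega) (by omega)]
      exact rel4 m i h2
    · have hm : m = i + 1 := by omega
      subst hm
      refine ⟨piG (i + 1) * piG i, S.mul_mem (hS _ le_rfl) (hS _ (by omega)), ?_⟩
      rw [Equiv.swap_apply_right]
      have h1 := rel3 i (-1) (Or.inr rfl)
      simp only [zpow_neg_one] at h1
      have hv : vG (i + 1) = (piG i)⁻¹ * vG i * piG (i + 1) * piG i := by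
        have : vG (i + 1) = ((piG i)⁻¹ * vG i) * piG (i + 1) * piG i := by
          rw [h1]; group
        simpa using this
      rw [hv]; group

/-- `w` interacts well with the `v`'s, with correction terms in `S`. -/
private def GoodS (S : Subgroup GBV) (w : FreeGroup ℕ) : Prop :=
  ∀ m, ∃ c ∈ S, ψ w * vG m = vG (φ w m) * c

private lemma goodS_one (S : Subgroup GBV) : GoodS S 1 := fun m =>
  ⟨1, S.one_mem, by simp⟩

private lemma goodS_mul {S : Subgroup GBV} {x y : FreeGroup ℕ}
    (hx : GoodS S x) (hy : GoodS S y) : GoodS S (x * y) := fun m => by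
  obtain ⟨cy, hcy, hy'⟩ := hy m
  obtain ⟨cx, hcx, hx'⟩ := hx (φ y m)
  refine ⟨cx * cy, S.mul_mem hcx hcy, ?_⟩
  rw [map_mul, map_mul]
  calc ψ x * ψ y * vG m = ψ x * (vG (φ y m) * cy) := by rw [mul_assoc, hy']
    _ = vG (φ x (φ y m)) * cx * cy := by rw [← mul_assoc, hx']
    _ = vG ((φ x * φ y) m) * (cx * cy) := by rw [Equiv.Perm.mul_apply, mul_assoc]

private lemma goodS_inv {S : Subgroup GBV} {x : FreeGroup ℕ}
    (hx : GoodS S x) : GoodS S x⁻¹ := fun m => by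
  obtain ⟨c, hc, h⟩ := hx ((φ x)⁻¹ m)
  rw [show ∀ (e : Equiv.Perm ℕ) n, e (e⁻¹ n) = n from fun e n => Equiv.apply_symm_apply e n] at h
  refine ⟨c⁻¹, S.inv_mem hc, ?_⟩
  rw [map_inv, map_inv]
  have h2 : vG m = ψ x * vG ((φ x)⁻¹ m) * c⁻¹ := eq_mul_inv_of_mul_eq h.symm
  rw [h2]; group

private lemma goodS_of {S : Subgroup GBV} (i : ℕ) (hS : ∀ j, j ≤ i + 1 → piG j ∈ S) :
    GoodS S (FreeGroup.of i) := fun m => by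
  obtain ⟨c, hc, h⟩ := gen_v i m hS
  refine ⟨c, hc, ?_⟩
  rw [show ψ (FreeGroup.of i) = piG i from FreeGroup.lift_apply_of,
    show φ (FreeGroup.of i) = Equiv.swap i (i + 1) from FreeGroup.lift_apply_of]
  exact h

/-- Bounds for the permutation `φ w`. -/
private def PhiBd (k : ℕ) (w : FreeGroup ℕ) : Prop :=
  (∀ m, k + 1 < m → φ w m = m) ∧ (∀ m, m ≤ k + 1 → φ w m ≤ k + 1)

private lemma phiBd_one (k : ℕ) : PhiBd k 1 := by
  constructor <;> intro m hm <;> simp [hm]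

private lemma phiBd_mul {k : ℕ} {x y : FreeGroup ℕ}
    (hx : PhiBd k x) (hy : PhiBd k y) : PhiBd k (x * y) := by
  constructor <;> intro m hm <;>
    rw [map_mul, Equiv.Perm.mul_apply]
  · rw [hy.1 m hm, hx.1 m hm]
  · exact hx.2 _ (hy.2 m hm)

private lemma phiBd_inv {k : ℕ} {x : FreeGroup ℕ} (hx : PhiBd k x) : PhiBd k x⁻¹ := by
  constructor <;> intro m hm <;> rw [map_inv]
  · conv_lhs => rw [← hx.1 m hm]
    exact Equiv.symm_apply_apply _ _
  · by_contra h'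
    push_neg at h'
    have h2 := hx.1 _ h'
    rw [show ∀ (e : Equiv.Perm ℕ) n, e (e⁻¹ n) = n from fun e n => Equiv.apply_symm_apply e n] at h2
    omega

private lemma phiBd_of {k i : ℕ} (hi : i ≤ k) : PhiBd k (FreeGroup.of i) := by
  constructor <;> intro m hm <;>
    rw [show φ (FreeGroup.of i) = Equiv.swap i (i + 1) from FreeGroup.lift_apply_of]
  · exact Equiv.swap_apply_of_ne_of_ne (by omega) (by omega)
  · rcases eq_or_ne m i with rfl | h1
    · rw [Equiv.swap_apply_left]; omega
    rcases eq_or_ne m (i + 1) with rfl | h2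
    · rw [Equiv.swap_apply_right]; omega
    · rw [Equiv.swap_apply_of_ne_of_ne h1 h2]; exact hm

private lemma goodS_part2 {S : Subgroup GBV} {w : FreeGroup ℕ} (h : GoodS S w) (m : ℕ) :
    ∃ c ∈ S, (vG m)⁻¹ * ψ w = c * (vG ((φ w)⁻¹ m))⁻¹ := by
  obtain ⟨c, hc, h'⟩ := h ((φ w)⁻¹ m)
  rw [show ∀ (e : Equiv.Perm ℕ) n, e (e⁻¹ n) = n from fun e n => Equiv.apply_symm_apply e n] at h'
  refine ⟨c, hc, ?_⟩
  have hc2 : c = (vG m)⁻¹ * (ψ w * vG ((φ w)⁻¹ m)) := by rw [h']; group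
  rw [hc2]; group

/-- Lemma: for every word `w` and every `m`: (1) `ψ(w)·v_m = v_{φ(w)(m)}·w'` for some
`w' ∈ P`; (2) `v_m⁻¹·ψ(w) = w''·v_{φ(w)⁻¹(m)}⁻¹` for some `w'' ∈ P`.  Moreover if `w`
lies in the subgroup generated by the free generators indexed by `0, …, k`, then `w'`
and `w''` can be taken in the subgroup generated by `{π_0, …, π_{k+1}}`, and
`φ(w)(m) = m` for `m > k+1` while `φ(w)(m) ≤ k+1` for `m ≤ k+1`. -/
theorem pi_v_interaction (w : FreeGroup ℕ) (m : ℕ) :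
    (∃ w' ∈ P, ψ w * vG m = vG (φ w m) * w') ∧
    (∃ w'' ∈ P, (vG m)⁻¹ * ψ w = w'' * (vG ((φ w)⁻¹ m))⁻¹) ∧
    (∀ k : ℕ, w ∈ Subgroup.closure (FreeGroup.of '' {i : ℕ | i ≤ k}) →
      (∃ w' ∈ Subgroup.closure {x : GBV | ∃ i, i ≤ k + 1 ∧ x = piG i},
          ψ w * vG m = vG (φ w m) * w') ∧
      (∃ w'' ∈ Subgroup.closure {x : GBV | ∃ i, i ≤ k + 1 ∧ x = piG i},
          (vG m)⁻¹ * ψ w = w'' * (vG ((φ w)⁻¹ m))⁻¹) ∧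
      (k + 1 < m → φ w m = m) ∧ (m ≤ k + 1 → φ w m ≤ k + 1)) := by
  classical
  have hP : GoodS P w := by
    induction w using FreeGroup.induction_on with
    | C1 => exact goodS_one P
    | of x => exact goodS_of x (fun j _ => Subgroup.subset_closure ⟨j, rfl⟩)
    | inv_of x hx => exact goodS_inv hx
    | mul x y hx hy => exact goodS_mul hx hy
  refine ⟨hP m, goodS_part2 hP m, ?_⟩
  intro k hw
  have hbk : GoodS (Subgroup.closure {x : GBV | ∃ i, i ≤ k + 1 ∧ x = piG i}) w ∧
      PhiBd k w := by
    refine Subgroup.closure_induction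
      (p := fun g _ =>
        GoodS (Subgroup.closure {x : GBV | ∃ i, i ≤ k + 1 ∧ x = piG i}) g ∧ PhiBd k g)
      ?_ ⟨goodS_one _, phiBd_one k⟩
      (fun x y _ _ hx hy => ⟨goodS_mul hx.1 hy.1, phiBd_mul hx.2 hy.2⟩)
      (fun x _ hx => ⟨goodS_inv hx.1, phiBd_inv hx.2⟩) hw
    rintro x ⟨i, hi, rfl⟩
    simp only [Set.mem_setOf_eq] at hi
    exact ⟨goodS_of i (fun j hj => Subgroup.subset_closure ⟨j, by omega, rfl⟩),
      phiBd_of hi⟩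
  exact ⟨hbk.1 m, goodS_part2 hbk.1 m, fun h => hbk.2.1 m h, fun h => hbk.2.2 m h⟩

end BrinStmt6
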